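/- Let 𝓛 be a finite field extension of a standard d-dimensional local field, with system of local uniformizers T_1,…,T_{d−1}, π_𝓛, let K ⊆ 𝓛 be a finite extension of ℚ_p with O_K ⊆ O_𝓛, let F be a formal group law over O_K, and fix n ≥ 1. Set J_n = { ī = (i_1,…,i_{d−1}) : 0 ≤ i_1,…,i_{d−1} < p^n }. Then every y in the maximal ideal μ_𝓛 can be written as a convergent infinite formal-group sum y = ⊕_{k=1}^∞ y_k, where y_k = ⊕_{ī ∈ J_n} γ_{ī,k}^{p^n} · T_1^{i_1}⋯T_{d−1}^{i_{d−1}} · π_𝓛^k for suitable elements γ_{ī,k} ∈ O_𝓛; here ⊕ denotes the group operation x ⊕_F y = F(x,y), and convergence means that the partial sums satisfy y ⊖_F (y_1 ⊕ ⋯ ⊕ y_m) ≡ 0 (mod π_𝓛^{m+1}) for every m ≥ 1. -/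

import Mathlib

/-- Axioms for a (rank-one) discrete valuation `v` on a field `F`, written additively with
`v 0 = ⊤` and value group `ℤ`. -/
structure IsDiscVal {F : Type*} [Field F] (v : F → WithTop ℤ) : Prop where
  eq_top_iff : ∀ x, v x = ⊤ ↔ x = 0
  map_mul : ∀ x y, v (x * y) = v x + v y
  min_le_add : ∀ x y, min (v x) (v y) ≤ v (x + y)
  exists_uniformizer : ∃ x, v x = 1

namespace IsDiscVal

variable {F : Type*} [Field F] {v : F → WithTop ℤ}

theorem v_one (hv : IsDiscVal v) : v 1 = 0 := by
  have h1 : v 1 ≠ ⊤ := fun h => one_ne_zero ((hv.eq_top_iff 1).mp h)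
  obtain ⟨n, hn⟩ := WithTop.ne_top_iff_exists.mp h1
  have hmul := hv.map_mul 1 1
  rw [mul_one, ← hn] at hmul
  have hn0 : n = n + n := by exact_mod_cast hmul
  have : n = 0 := by omega
  simp [← hn, this]

theorem v_neg_one (hv : IsDiscVal v) : v (-1) = 0 := by
  have h1 : v (-1) ≠ ⊤ := fun h => (by simp : (-1 : F) ≠ 0) ((hv.eq_top_iff (-1)).mp h)
  obtain ⟨n, hn⟩ := WithTop.ne_top_iff_exists.mp h1
  have hmul := hv.map_mul (-1) (-1)
  rw [neg_one_mul, neg_neg, hv.v_one, ← hn] at hmul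
  have hn0 : n + n = (0 : ℤ) := by exact_mod_cast hmul.symm
  have : n = 0 := by omega
  simp [← hn, this]

theorem v_neg (hv : IsDiscVal v) (x : F) : v (-x) = v x := by
  have h := hv.map_mul (-1) x
  rw [neg_one_mul, hv.v_neg_one, zero_add] at h
  exact h

theorem v_zero (hv : IsDiscVal v) : v 0 = ⊤ := (hv.eq_top_iff 0).mpr rfl

/-- The valuation (sub)ring `O = {x | v x ≥ 0}` of a discretely valued field. -/
noncomputable def subring (hv : IsDiscVal v) : Subring F where
  carrier := {x | 0 ≤ v x}
  zero_mem' := by simp only [Set.mem_setOf_eq, hv.v_zero]; exact le_top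
  one_mem' := by simp [Set.mem_setOf_eq, hv.v_one]
  add_mem' := fun {a b} ha hb => le_trans (le_min ha hb) (hv.min_le_add a b)
  mul_mem' := fun {a b} ha hb => by
    simpa [Set.mem_setOf_eq, hv.map_mul a b] using add_nonneg ha hb
  neg_mem' := fun {a} ha => by
    simpa only [Set.mem_setOf_eq, hv.v_neg a] using ha

theorem mem_subring_iff (hv : IsDiscVal v) (x : F) : x ∈ hv.subring ↔ 0 ≤ v x := Iff.rfl

/- new lemmas -/

theorem v_add_ge (hv : IsDiscVal v) {x y : F} {c : WithTop ℤ} (hx : c ≤ v x) (hy : c ≤ v y) :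
    c ≤ v (x + y) := le_trans (le_min hx hy) (hv.min_le_add x y)

theorem v_sub_ge (hv : IsDiscVal v) {x y : F} {c : WithTop ℤ} (hx : c ≤ v x) (hy : c ≤ v y) :
    c ≤ v (x - y) := by
  rw [sub_eq_add_neg]
  exact hv.v_add_ge hx (by rwa [hv.v_neg])

theorem v_mul_ge (hv : IsDiscVal v) {x y : F} {c d : WithTop ℤ} (hx : c ≤ v x) (hy : d ≤ v y) :
    c + d ≤ v (x * y) := by
  rw [hv.map_mul]; exact add_le_add hx hy

theorem v_pow_ge (hv : IsDiscVal v) {x : F} {c : WithTop ℤ} (hx : c ≤ v x) (k : ℕ) :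
    k • c ≤ v (x ^ k) := by
  induction k with
  | zero => simp [hv.v_one]
  | succ k ih =>
      rw [pow_succ, succ_nsmul]
      exact hv.v_mul_ge ih hx

theorem natCast_nsmul_withTop (k M : ℕ) : ((k * M : ℕ) : WithTop ℤ) = k • (M : WithTop ℤ) := by
  induction k with
  | zero => simp
  | succ k ih => rw [succ_nsmul, ← ih, ← Nat.cast_add, Nat.succ_mul]

theorem v_pow_ge_nat (hv : IsDiscVal v) {x : F} {M : ℕ} (hx : (M : WithTop ℤ) ≤ v x) (k : ℕ) :
    ((k * M : ℕ) : WithTop ℤ) ≤ v (x ^ k) := by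
  rw [natCast_nsmul_withTop]
  exact hv.v_pow_ge hx k

theorem v_pow_ge_zero (hv : IsDiscVal v) {x : F} (hx : (0 : WithTop ℤ) ≤ v x) (k : ℕ) :
    (0 : WithTop ℤ) ≤ v (x ^ k) := by
  simpa using hv.v_pow_ge hx k

theorem v_sum_ge (hv : IsDiscVal v) {ι : Type*} {s : Finset ι} {f : ι → F} {c : WithTop ℤ}
    (h : ∀ i ∈ s, c ≤ v (f i)) : c ≤ v (∑ i ∈ s, f i) := by
  classical
  induction s using Finset.cons_induction with
  | empty => simp [hv.v_zero]
  | cons a s ha ih =>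
      rw [Finset.sum_cons]
      exact hv.v_add_ge (h a (Finset.mem_cons_self a s))
        (ih fun i hi => h i (Finset.mem_cons_of_mem hi))

theorem v_prod_ge_zero (hv : IsDiscVal v) {ι : Type*} {s : Finset ι} {f : ι → F}
    (h : ∀ i ∈ s, (0 : WithTop ℤ) ≤ v (f i)) : (0 : WithTop ℤ) ≤ v (∏ i ∈ s, f i) := by
  classical
  induction s using Finset.cons_induction with
  | empty => simp [hv.v_one]
  | cons a s ha ih =>
      rw [Finset.prod_cons]
      simpa using hv.v_mul_ge (h a (Finset.mem_cons_self a s))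
        (ih fun i hi => h i (Finset.mem_cons_of_mem hi))

theorem eq_zero_of_forall_le (hv : IsDiscVal v) {x : F} (h : ∀ N : ℕ, (N : WithTop ℤ) ≤ v x) :
    x = 0 := by
  rw [← hv.eq_top_iff]
  by_contra htop
  obtain ⟨k, hk⟩ := WithTop.ne_top_iff_exists.mp htop
  have := h (k.toNat + 1)
  rw [← hk] at this
  have : ((k.toNat : ℤ) + 1 : ℤ) ≤ k := by exact_mod_cast this
  omega

end IsDiscVal

open scoped Classical

/-- Substitution of the family `g` (of power series with zero constant term) into the
multivariable power series `F`. -/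
noncomputable def msubst {σ τ R : Type*} [Fintype σ] [CommRing R]
    (g : σ → MvPowerSeries τ R) (F : MvPowerSeries σ R) : MvPowerSeries τ R :=
  fun m =>
    ∑ k ∈ Finset.Iic (Finsupp.equivFunOnFinite.symm
        (fun _ : σ => m.sum fun _ v => v)),
      MvPowerSeries.coeff k F * MvPowerSeries.coeff m (∏ i : σ, g i ^ k i)

/-- A (one-dimensional, commutative) formal group law over `R`. -/
structure IsFormalGroupLaw {R : Type*} [CommRing R] (F : MvPowerSeries (Fin 2) R) : Prop where
  coeff_zero : MvPowerSeries.coeff 0 F = 0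
  coeff_X : MvPowerSeries.coeff (Finsupp.single 0 1) F = 1
  coeff_Y : MvPowerSeries.coeff (Finsupp.single 1 1) F = 1
  comm : ∀ e : Fin 2 →₀ ℕ,
    MvPowerSeries.coeff e F = MvPowerSeries.coeff (e.equivMapDomain (Equiv.swap 0 1)) F
  assoc : msubst ![msubst ![MvPowerSeries.X 0, MvPowerSeries.X 1] F, MvPowerSeries.X 2] F
      = msubst ![MvPowerSeries.X 0, msubst ![MvPowerSeries.X 1, MvPowerSeries.X 2] F] F
      (R := R) (τ := Fin 3)

/-- `z = F(x, y)`: two-variable evaluation of a multivariable power series via truncations,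
for points of the maximal ideal (`v ≥ 1`). -/
def MvEval2 {𝓛 : Type*} [Field 𝓛] (v : 𝓛 → WithTop ℤ) (F : MvPowerSeries (Fin 2) 𝓛)
    (x y z : 𝓛) : Prop :=
  ∀ N : ℕ, (N : WithTop ℤ) ≤
    v (z - MvPolynomial.eval ![x, y]
      (MvPowerSeries.trunc 𝓛 (Finsupp.equivFunOnFinite.symm fun _ => N) F))

/-- Iterated formal-group sum `a_1 ⊕ a_2 ⊕ ⋯ ⊕ a_r` of a list of terms (`⊕ = fadd`). -/
noncomputable def finFold {𝓛 α : Type*} [Field 𝓛] (fadd : 𝓛 → 𝓛 → 𝓛)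
    (s : List α) (f : α → 𝓛) : 𝓛 :=
  (s.map f).foldr fadd 0

section FGLEstimates

variable {𝓛 : Type*} [Field 𝓛] {v : 𝓛 → WithTop ℤ}

theorem IsDiscVal.pow_sub_pow_ge (hv : IsDiscVal v) {x x' : 𝓛} (hx : 1 ≤ v x) (hx' : 1 ≤ v x')
    {N : ℕ} (h : (N : WithTop ℤ) ≤ v (x' - x)) :
    ∀ a : ℕ, ((N + a : ℕ) : WithTop ℤ) ≤ v (x' ^ (a + 1) - x ^ (a + 1)) := by
  intro a
  induction a with
  | zero => simpa using h
  | succ a ih =>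
      have hid : x' ^ (a + 2) - x ^ (a + 2)
          = x' * (x' ^ (a + 1) - x ^ (a + 1)) + (x' - x) * x ^ (a + 1) := by ring
      rw [hid]
      have h1 : (1 : WithTop ℤ) + ((N + a : ℕ) : WithTop ℤ) ≤ v (x' * (x' ^ (a+1) - x ^ (a+1))) :=
        hv.v_mul_ge hx' ih
      have h2 : ((N : ℕ) : WithTop ℤ) + ((a + 1 : ℕ) : WithTop ℤ)
          ≤ v ((x' - x) * x ^ (a + 1)) := by
        refine hv.v_mul_ge h ?_
        have := hv.v_pow_ge_nat (M := 1) (by simpa using hx) (a + 1)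
        simpa using this
      have hc1 : ((N + (a + 1) : ℕ) : WithTop ℤ) = (1 : WithTop ℤ) + ((N + a : ℕ) : WithTop ℤ) := by
        have hnat : N + (a + 1) = 1 + (N + a) := by omega
        rw [hnat, Nat.cast_add, Nat.cast_one]
      have hc2 : ((N + (a + 1) : ℕ) : WithTop ℤ)
          = ((N : ℕ) : WithTop ℤ) + ((a + 1 : ℕ) : WithTop ℤ) := by
        rw [← Nat.cast_add]
      refine hv.v_add_ge ?_ ?_
      · rw [hc1]; exact h1
      · rw [hc2]; exact h2

theorem IsDiscVal.mixed_bound (hv : IsDiscVal v) {x x' z : 𝓛}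
    (hx : 1 ≤ v x) (hx' : 1 ≤ v x') (hz : 1 ≤ v z) {N : ℕ}
    (hd : (N : WithTop ℤ) ≤ v (x' - x)) (a b : ℕ) (hab : 2 ≤ a + b) :
    ((N + 1 : ℕ) : WithTop ℤ) ≤ v ((x' ^ a - x ^ a) * z ^ b) := by
  rcases a with _ | a'
  · simp only [pow_zero, sub_self, zero_mul, hv.v_zero]
    exact le_top
  · have hb1 := hv.pow_sub_pow_ge hx hx' hd a'
    have hb2 : ((b : ℕ) : WithTop ℤ) ≤ v (z ^ b) := by
      simpa using hv.v_pow_ge_nat (M := 1) (by simpa using hz) b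
    have := hv.v_mul_ge hb1 hb2
    refine le_trans ?_ this
    rw [← Nat.cast_add]
    exact Nat.mono_cast (by omega)

variable {F : MvPowerSeries (Fin 2) 𝓛} {fadd : 𝓛 → 𝓛 → 𝓛}

/-- The main estimate: `fadd x' y' − fadd x y ≡ (x'−x) + (y'−y) mod π^(N+1)`. -/
theorem IsDiscVal.fadd_diff (hv : IsDiscVal v)
    (hFv : ∀ e, (0 : WithTop ℤ) ≤ v (MvPowerSeries.coeff e F))
    (hFX : MvPowerSeries.coeff (Finsupp.single 0 1) F = 1)
    (hFY : MvPowerSeries.coeff (Finsupp.single 1 1) F = 1)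
    (hfadd : ∀ x y : 𝓛, 1 ≤ v x → 1 ≤ v y → MvEval2 v F x y (fadd x y))
    (N : ℕ) {x y x' y' : 𝓛}
    (hx : 1 ≤ v x) (hy : 1 ≤ v y) (hx' : 1 ≤ v x') (hy' : 1 ≤ v y')
    (hdx : (N : WithTop ℤ) ≤ v (x' - x)) (hdy : (N : WithTop ℤ) ≤ v (y' - y)) :
    ((N + 1 : ℕ) : WithTop ℤ) ≤ v (fadd x' y' - fadd x y - (x' - x) - (y' - y)) := by
  classical
  set B : Fin 2 →₀ ℕ := Finsupp.equivFunOnFinite.symm (fun _ => N + 1) with hB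
  set P : MvPolynomial (Fin 2) 𝓛 := MvPowerSeries.trunc 𝓛 B F with hP
  have h1 := hfadd x' y' hx' hy' (N + 1)
  have h2 := hfadd x y hx hy (N + 1)
  have hBapp : ∀ i : Fin 2, B i = N + 1 := by
    intro i; simp [hB, Finsupp.equivFunOnFinite]
  have evalP : ∀ a b : 𝓛, MvPolynomial.eval ![a, b] P
      = ∑ d ∈ P.support, P.coeff d * (a ^ d 0 * b ^ d 1) := by
    intro a b
    rw [MvPolynomial.eval_eq']
    refine Finset.sum_congr rfl fun d _ => ?_
    rw [Fin.prod_univ_two]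
    simp
  set X : Fin 2 →₀ ℕ := Finsupp.single 0 1 with hXdef
  set Y : Fin 2 →₀ ℕ := Finsupp.single 1 1 with hYdef
  have hXltB : X < B := by
    constructor
    · intro i
      rw [hBapp i]
      fin_cases i <;> simp [hXdef, Finsupp.single_apply]
    · intro hc
      have := hc 1
      rw [hBapp 1] at this
      simp [hXdef, Finsupp.single_apply] at this
  have hYltB : Y < B := by
    constructor
    · intro i
      rw [hBapp i]
      fin_cases i <;> simp [hYdef, Finsupp.single_apply]
    · intro hc
      have := hc 0
      rw [hBapp 0] at this
      simp [hYdef, Finsupp.single_apply] at this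
  have hPX : P.coeff X = 1 := by
    rw [hP, MvPowerSeries.coeff_trunc, if_pos hXltB]; exact hFX
  have hPY : P.coeff Y = 1 := by
    rw [hP, MvPowerSeries.coeff_trunc, if_pos hYltB]; exact hFY
  have hXmem : X ∈ P.support := by
    rw [MvPolynomial.mem_support_iff, hPX]; exact one_ne_zero
  have hYmem : Y ∈ P.support := by
    rw [MvPolynomial.mem_support_iff, hPY]; exact one_ne_zero
  have hYX : Y ≠ X := by
    intro h
    have := DFunLike.congr_fun h (0 : Fin 2)
    simp [hXdef, hYdef, Finsupp.single_apply] at this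
  set g : (Fin 2 →₀ ℕ) → 𝓛 :=
    fun d => P.coeff d * (x' ^ d 0 * y' ^ d 1) - P.coeff d * (x ^ d 0 * y ^ d 1) with hg
  have hsplit : MvPolynomial.eval ![x', y'] P - MvPolynomial.eval ![x, y] P
      = ∑ d ∈ P.support, g d := by
    rw [evalP, evalP, ← Finset.sum_sub_distrib]
  have hgX : g X = x' - x := by
    have h0 : X 0 = 1 := by simp [hXdef]
    have h1' : X 1 = 0 := by simp [hXdef, Finsupp.single_apply]
    simp [hg, h0, h1', hPX]
  have hgY : g Y = y' - y := by
    have h0 : Y 0 = 0 := by simp [hYdef, Finsupp.single_apply]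
    have h1' : Y 1 = 1 := by simp [hYdef]
    simp [hg, h0, h1', hPY]
  have hYmem' : Y ∈ P.support.erase X := Finset.mem_erase.mpr ⟨hYX, hYmem⟩
  have hsum : ∑ d ∈ P.support, g d
      = g X + (g Y + ∑ d ∈ (P.support.erase X).erase Y, g d) := by
    rw [Finset.add_sum_erase _ g hYmem', Finset.add_sum_erase _ g hXmem]
  set R : 𝓛 := ∑ d ∈ (P.support.erase X).erase Y, g d with hR
  -- bound R
  have hRbound : ((N + 1 : ℕ) : WithTop ℤ) ≤ v R := by
    refine hv.v_sum_ge fun d hd => ?_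
    have hdY : d ≠ Y := (Finset.mem_erase.mp hd).1
    have hdX : d ≠ X := (Finset.mem_erase.mp (Finset.mem_erase.mp hd).2).1
    have hcd : (0 : WithTop ℤ) ≤ v (P.coeff d) := by
      rw [hP, MvPowerSeries.coeff_trunc]
      split
      · exact hFv d
      · rw [hv.v_zero]; exact le_top
    by_cases hd0 : d = 0
    · have : g d = 0 := by simp [hg, hd0]
      rw [this, hv.v_zero]; exact le_top
    · -- total degree at least 2
      have hdecomp : d = Finsupp.single 0 (d 0) + Finsupp.single 1 (d 1) := by
        ext i
        fin_cases i <;> simp [Finsupp.single_apply]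
      have hdeg : 2 ≤ d 0 + d 1 := by
        by_contra hlt
        push_neg at hlt
        have hcases : (d 0 = 0 ∧ d 1 = 0) ∨ (d 0 = 1 ∧ d 1 = 0) ∨ (d 0 = 0 ∧ d 1 = 1) := by
          omega
        rcases hcases with ⟨h0, h1⟩ | ⟨h0, h1⟩ | ⟨h0, h1⟩
        · exact hd0 (by rw [hdecomp, h0, h1]; simp)
        · exact hdX (by rw [hdecomp, h0, h1]; simp [hXdef])
        · exact hdY (by rw [hdecomp, h0, h1]; simp [hYdef])
      have hgid : g d = P.coeff d * (x' ^ d 0 * y' ^ d 1 - x ^ d 0 * y ^ d 1) := by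
        rw [hg]; ring
      rw [hgid]
      have hdiff : ((N + 1 : ℕ) : WithTop ℤ) ≤ v (x' ^ d 0 * y' ^ d 1 - x ^ d 0 * y ^ d 1) := by
        have hid2 : x' ^ d 0 * y' ^ d 1 - x ^ d 0 * y ^ d 1
            = (x' ^ d 0 - x ^ d 0) * y' ^ d 1 + (y' ^ d 1 - y ^ d 1) * x ^ d 0 := by ring
        rw [hid2]
        exact hv.v_add_ge (hv.mixed_bound hx hx' hy' hdx (d 0) (d 1) hdeg)
          (hv.mixed_bound hy hy' hx hdy (d 1) (d 0) (by omega))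
      have := hv.v_mul_ge hcd hdiff
      simpa using this
  -- assemble
  set E' : 𝓛 := MvPolynomial.eval ![x', y'] P with hE'
  set E : 𝓛 := MvPolynomial.eval ![x, y] P with hE
  have hEE : E' - E = (x' - x) + (y' - y) + R := by
    rw [hE', hE, hsplit, hsum, hgX, hgY, hR]; ring
  have hkey : fadd x' y' - fadd x y - (x' - x) - (y' - y)
      = (fadd x' y' - E') - (fadd x y - E) + (E' - E - (x' - x) - (y' - y)) := by ring
  have hEkey : E' - E - (x' - x) - (y' - y) = R := by rw [hEE]; ring
  rw [hkey, hEkey]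
  refine hv.v_add_ge (hv.v_sub_ge ?_ ?_) hRbound
  · exact h1
  · exact h2

end FGLEstimates

section FGLMore

variable {𝓛 : Type*} [Field 𝓛] {v : 𝓛 → WithTop ℤ}
variable {F : MvPowerSeries (Fin 2) 𝓛} {fadd : 𝓛 → 𝓛 → 𝓛}

theorem evalP_eq (P : MvPolynomial (Fin 2) 𝓛) (a b : 𝓛) :
    MvPolynomial.eval ![a, b] P = ∑ d ∈ P.support, P.coeff d * (a ^ d 0 * b ^ d 1) := by
  rw [MvPolynomial.eval_eq']
  refine Finset.sum_congr rfl fun d _ => ?_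
  rw [Fin.prod_univ_two]
  simp

theorem IsDiscVal.fadd_zero_zero (hv : IsDiscVal v)
    (hF0 : MvPowerSeries.coeff 0 F = 0)
    (hfadd : ∀ x y : 𝓛, 1 ≤ v x → 1 ≤ v y → MvEval2 v F x y (fadd x y)) :
    fadd 0 0 = 0 := by
  classical
  have hv0 : (1 : WithTop ℤ) ≤ v 0 := by rw [hv.v_zero]; exact le_top
  refine hv.eq_zero_of_forall_le fun N => ?_
  have h := hfadd 0 0 hv0 hv0 N
  set P : MvPolynomial (Fin 2) 𝓛 :=
    MvPowerSeries.trunc 𝓛 (Finsupp.equivFunOnFinite.symm fun _ => N) F with hP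
  have heval : MvPolynomial.eval ![(0 : 𝓛), 0] P = 0 := by
    rw [evalP_eq]
    refine Finset.sum_eq_zero fun d hd => ?_
    have hd0 : d ≠ 0 := by
      intro hc
      have : P.coeff d ≠ 0 := MvPolynomial.mem_support_iff.mp hd
      apply this
      rw [hc, hP, MvPowerSeries.coeff_trunc]
      split
      · exact hF0
      · rfl
    have : d 0 ≠ 0 ∨ d 1 ≠ 0 := by
      by_contra hc
      push_neg at hc
      apply hd0
      have hdecomp : d = Finsupp.single 0 (d 0) + Finsupp.single 1 (d 1) := by
        ext i
        fin_cases i <;> simp [Finsupp.single_apply]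
      rw [hdecomp, hc.1, hc.2]; simp
    rcases this with h' | h'
    · rw [zero_pow h']; ring
    · rw [zero_pow h']; ring
  rw [heval, sub_zero] at h
  exact h

variable (hv : IsDiscVal v)
    (hFv : ∀ e, (0 : WithTop ℤ) ≤ v (MvPowerSeries.coeff e F))
    (hF0 : MvPowerSeries.coeff 0 F = 0)
    (hFX : MvPowerSeries.coeff (Finsupp.single 0 1) F = 1)
    (hFY : MvPowerSeries.coeff (Finsupp.single 1 1) F = 1)
    (hfadd : ∀ x y : 𝓛, 1 ≤ v x → 1 ≤ v y → MvEval2 v F x y (fadd x y))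

include hv hFv hF0 hFX hFY hfadd

theorem fadd_sub_add (M : ℕ) (hM : 1 ≤ M) {a b : 𝓛}
    (ha : (M : WithTop ℤ) ≤ v a) (hb : (M : WithTop ℤ) ≤ v b) :
    ((M + 1 : ℕ) : WithTop ℤ) ≤ v (fadd a b - a - b) := by
  have hM1 : (1 : WithTop ℤ) ≤ (M : WithTop ℤ) := by
    rw [← Nat.cast_one]; exact Nat.mono_cast hM
  have hv0 : (1 : WithTop ℤ) ≤ v 0 := by rw [hv.v_zero]; exact le_top
  have h00 := hv.fadd_zero_zero hF0 hfadd
  have h := hv.fadd_diff hFv hFX hFY hfadd M (x := 0) (y := 0) (x' := a) (y' := b)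
    hv0 hv0 (le_trans hM1 ha) (le_trans hM1 hb)
    (by rw [sub_zero]; exact ha) (by rw [sub_zero]; exact hb)
  have hid : fadd a b - fadd 0 0 - (a - 0) - (b - 0) = fadd a b - a - b := by
    rw [h00]; ring
  rwa [hid] at h

theorem fadd_v_ge (M : ℕ) (hM : 1 ≤ M) {a b : 𝓛}
    (ha : (M : WithTop ℤ) ≤ v a) (hb : (M : WithTop ℤ) ≤ v b) :
    (M : WithTop ℤ) ≤ v (fadd a b) := by
  have h := fadd_sub_add hv hFv hF0 hFX hFY hfadd M hM ha hb
  have hid : fadd a b = (fadd a b - a - b) + a + b := by ring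
  rw [hid]
  refine hv.v_add_ge (hv.v_add_ge (le_trans (Nat.mono_cast (by omega)) h) ha) hb

theorem foldr_v_ge (M : ℕ) (hM : 1 ≤ M) (l : List 𝓛) (hl : ∀ a ∈ l, (M : WithTop ℤ) ≤ v a)
    {s : 𝓛} (hs : (M : WithTop ℤ) ≤ v s) : (M : WithTop ℤ) ≤ v (l.foldr fadd s) := by
  induction l with
  | nil => exact hs
  | cons a l ih =>
      rw [List.foldr_cons]
      exact fadd_v_ge hv hFv hF0 hFX hFY hfadd M hM (hl a (by simp))
        (ih fun a ha => hl a (by simp [ha]))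

theorem foldr_sub_sum (M : ℕ) (hM : 1 ≤ M) (l : List 𝓛)
    (hl : ∀ a ∈ l, (M : WithTop ℤ) ≤ v a) :
    ((M + 1 : ℕ) : WithTop ℤ) ≤ v (l.foldr fadd 0 - l.sum) := by
  induction l with
  | nil => simp [hv.v_zero]
  | cons a l ih =>
      rw [List.foldr_cons, List.sum_cons]
      have ht : (M : WithTop ℤ) ≤ v (l.foldr fadd 0) :=
        foldr_v_ge hv hFv hF0 hFX hFY hfadd M hM l (fun a ha => hl a (by simp [ha]))
          (by rw [hv.v_zero]; exact le_top)
      have h1 := fadd_sub_add hv hFv hF0 hFX hFY hfadd M hM (hl a (by simp)) ht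
      have h2 := ih fun a ha => hl a (by simp [ha])
      have hid : fadd a (l.foldr fadd 0) - (a + l.sum)
          = (fadd a (l.foldr fadd 0) - a - l.foldr fadd 0) + (l.foldr fadd 0 - l.sum) := by
        ring
      rw [hid]
      exact hv.v_add_ge h1 h2

theorem foldr_seed_diff (N : ℕ) (l : List 𝓛) (hl : ∀ a ∈ l, 1 ≤ v a)
    {s s' : 𝓛} (hs : 1 ≤ v s) (hs' : 1 ≤ v s') (hd : (N : WithTop ℤ) ≤ v (s' - s)) :
    ((N + 1 : ℕ) : WithTop ℤ) ≤ v (l.foldr fadd s' - l.foldr fadd s - (s' - s)) := by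
  induction l with
  | nil => simp [hv.v_zero]
  | cons a l ih =>
      rw [List.foldr_cons, List.foldr_cons]
      set t := l.foldr fadd s with htdef
      set t' := l.foldr fadd s' with ht'def
      have ha : 1 ≤ v a := hl a (by simp)
      have hone : ∀ r ∈ l, ((1 : ℕ) : WithTop ℤ) ≤ v r := fun r hr => by
        rw [Nat.cast_one]; exact hl r (by simp [hr])
      have ht : 1 ≤ v t := by
        have := foldr_v_ge hv hFv hF0 hFX hFY hfadd 1 le_rfl l hone
          (s := s) (by rw [Nat.cast_one]; exact hs)
        rwa [Nat.cast_one] at this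
      have ht' : 1 ≤ v t' := by
        have := foldr_v_ge hv hFv hF0 hFX hFY hfadd 1 le_rfl l hone
          (s := s') (by rw [Nat.cast_one]; exact hs')
        rwa [Nat.cast_one] at this
      have ihh := ih fun r hr => hl r (by simp [hr])
      have htt' : (N : WithTop ℤ) ≤ v (t' - t) := by
        have hid : t' - t = (t' - t - (s' - s)) + (s' - s) := by ring
        rw [hid]
        exact hv.v_add_ge (le_trans (Nat.mono_cast (by omega)) ihh) hd
      have hc2 := hv.fadd_diff hFv hFX hFY hfadd N (x := a) (y := t) (x' := a) (y' := t')
        ha ht ha ht' (by rw [sub_self, hv.v_zero]; exact le_top) htt'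
      rw [sub_self, sub_zero] at hc2
      have hid : fadd a t' - fadd a t - (s' - s)
          = (fadd a t' - fadd a t - (t' - t)) + (t' - t - (s' - s)) := by ring
      rw [hid]
      exact hv.v_add_ge hc2 ihh

end FGLMore

section LaurentTower
/-!  The iterated Laurent series tower `E_0 = 𝔽`, `E_{j+1} = E_j((T_{j+1}))`, presented as a
family of fields `E j` with isomorphisms `E (j+1) ≃+* LaurentSeries (E j)`. -/

variable (E : ℕ → Type) [∀ j, Field (E j)]
variable (estep : ∀ j, E (j + 1) ≃+* LaurentSeries (E j))

/-- The constant-coefficient embedding `E_m → E_{m+1}`. -/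
noncomputable def stepEmb (m : ℕ) : E m →+* E (m + 1) :=
  ((estep m).symm : LaurentSeries (E m) →+* E (m + 1)).comp
    (HahnSeries.C : E m →+* LaurentSeries (E m))

/-- The iterated constant-coefficient embedding `E_m → E_{m+j}`. -/
noncomputable def upEmb (m : ℕ) : ∀ j : ℕ, E m →+* E (m + j)
  | 0 => RingHom.id _
  | j + 1 => (stepEmb E estep (m + j)).comp (upEmb m j)

/-- The variable `T_{j+1}` of the `(j+1)`-st layer, viewed in `E_D` (for `j < D`). -/
noncomputable def towerVar (D j : ℕ) (_h : j < D) : E D :=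
  cast (congrArg E (by omega : (j + 1) + (D - (j + 1)) = D))
    (upEmb E estep (j + 1) (D - (j + 1))
      ((estep j).symm (HahnSeries.single (1 : ℤ) (1 : E j))))

/-- A recursive, cast-free presentation of the tower variables. -/
noncomputable def myVar : (m : ℕ) → (j : ℕ) → j < m → E m
  | 0, j, h => absurd h (Nat.not_lt_zero j)
  | m + 1, j, h =>
      if hj : j = m then (estep m).symm (HahnSeries.single (1 : ℤ) (1 : E m))
      else stepEmb E estep m (myVar m j (by omega))

theorem myVar_last (m : ℕ) (h : m < m + 1) :
    myVar E estep (m + 1) m h = (estep m).symm (HahnSeries.single (1 : ℤ) (1 : E m)) := by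
  simp [myVar]

theorem myVar_lt (m j : ℕ) (hj : j < m) (h : j < m + 1) :
    myVar E estep (m + 1) j h = stepEmb E estep m (myVar E estep m j hj) := by
  have : ¬ j = m := by omega
  simp [myVar, this]

theorem myVar_upEmb : ∀ (k j : ℕ),
    myVar E estep (j + 1 + k) j (by omega)
      = upEmb E estep (j + 1) k ((estep j).symm (HahnSeries.single (1 : ℤ) (1 : E j))) := by
  intro k
  induction k with
  | zero =>
      intro j
      simp [myVar, upEmb]
  | succ k ih =>
      intro j
      have hlt : j < j + 1 + k := by omega
      exact (myVar_lt E estep (j + 1 + k) j hlt (by omega)).trans (by rw [ih j]; rfl)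

theorem myVar_cast (j k D : ℕ) (hk : j + 1 + k = D) (h : j < D) :
    cast (congrArg E hk)
        (upEmb E estep (j + 1) k ((estep j).symm (HahnSeries.single (1 : ℤ) (1 : E j))))
      = myVar E estep D j h := by
  subst hk
  rw [cast_eq]
  exact (myVar_upEmb E estep k j).symm

theorem towerVar_eq_myVar (D j : ℕ) (h : j < D) :
    towerVar E estep D j h = myVar E estep D j h := by
  unfold towerVar
  exact myVar_cast E estep j (D - (j + 1)) D (by omega) h

end LaurentTower

section Frobenius

variable {L : Type} [Field L] {p : ℕ}

theorem charP_laurent [CharP L p] : CharP (LaurentSeries L) p := by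
  have hCinj : Function.Injective (HahnSeries.C : L →+* LaurentSeries L) := by
    intro a b h
    have := congrArg (fun x : LaurentSeries L => x.coeff 0) h
    simpa using this
  exact charP_of_injective_ringHom hCinj p

theorem hahn_frob_coeff (hp : p.Prime) [CharP L p] (f : LaurentSeries L) (g : ℤ) :
    (f ^ p).coeff g = if (p : ℤ) ∣ g then (f.coeff (g / p)) ^ p else 0 := by
  classical
  haveI : Fact p.Prime := ⟨hp⟩
  haveI : CharP (LaurentSeries L) p := charP_laurent
  have hp0 : p ≠ 0 := hp.ne_zero
  have hpz : (0 : ℤ) < (p : ℤ) := by exact_mod_cast hp.pos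
  have main : ∀ k : ℕ, ∀ f : LaurentSeries L, (g + 1 - p * f.order).toNat ≤ k →
      (f ^ p).coeff g = if (p : ℤ) ∣ g then (f.coeff (g / p)) ^ p else 0 := by
    intro k
    induction k with
    | zero =>
        intro f hk
        by_cases hf : f = 0
        · subst hf
          simp [zero_pow hp0]
        · have horder : g < (p : ℤ) * f.order := by omega
          have hL : (f ^ p).coeff g = 0 := by
            apply HahnSeries.coeff_eq_zero_of_lt_order
            rw [HahnSeries.order_pow, nsmul_eq_mul]
            exact horder
          rw [hL]
          split_ifs with hdvd
          · obtain ⟨c, rfl⟩ := hdvd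
            have hc : (p : ℤ) * c / p = c := Int.mul_ediv_cancel_left _ (by positivity)
            rw [hc]
            have : c < f.order := lt_of_mul_lt_mul_left horder (le_of_lt hpz)
            rw [HahnSeries.coeff_eq_zero_of_lt_order this, zero_pow hp0]
          · rfl
    | succ k ih =>
        intro f hk
        by_cases hf : f = 0
        · subst hf
          simp [zero_pow hp0]
        · set o := f.order with ho
          set a := f.coeff o with ha
          have hane : a ≠ 0 := mt HahnSeries.coeff_order_eq_zero.mp hf
          set f' : LaurentSeries L := f - HahnSeries.single o a with hf'def
          have hco : ∀ x : ℤ, f'.coeff x = if x = o then 0 else f.coeff x := by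
            intro x
            rw [hf'def, HahnSeries.coeff_sub, HahnSeries.coeff_single]
            split_ifs with hx
            · rw [hx, ← ha]; ring
            · ring
          have hfp : f ^ p = HahnSeries.single ((p : ℤ) * o) (a ^ p) + f' ^ p := by
            have hfe : f = HahnSeries.single o a + f' := by rw [hf'def]; ring
            rw [hfe, add_pow_char, HahnSeries.single_pow, nsmul_eq_mul]
          by_cases hf'0 : f' = 0
          · rw [hfp, hf'0, zero_pow hp0, add_zero, HahnSeries.coeff_single]
            split_ifs with h1 hdvd hdvd
            · obtain ⟨c, rfl⟩ := hdvd
              have hc : (p : ℤ) * c / p = c := Int.mul_ediv_cancel_left _ (by positivity)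
              rw [hc]
              have hcne : c = o := by
                have := mul_left_cancel₀ (a := (p : ℤ)) (by positivity) h1
                exact this
              rw [hcne, ← ha]
            · exact absurd ⟨o, h1⟩ hdvd
            · obtain ⟨c, rfl⟩ := hdvd
              have hc : (p : ℤ) * c / p = c := Int.mul_ediv_cancel_left _ (by positivity)
              rw [hc]
              have hcne : c ≠ o := fun hco' => h1 (by rw [hco'])
              have : f.coeff c = 0 := by
                have := hco c
                rw [hf'0] at this
                simp only [HahnSeries.coeff_zero] at this
                rcases (ite_eq_iff.mp this.symm) with ⟨h', _⟩ | ⟨h', he⟩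
                · exact absurd h' hcne
                · exact he
              rw [this, zero_pow hp0]
            · rfl
          · have ho' : o < f'.order := by
              rcases lt_trichotomy f'.order o with hlt | heq | hgt
              · exfalso
                apply (mt HahnSeries.coeff_order_eq_zero.mp hf'0)
                rw [hco]
                rw [if_neg (by omega)]
                exact HahnSeries.coeff_eq_zero_of_lt_order (by rw [← ho]; exact hlt)
              · exfalso
                apply (mt HahnSeries.coeff_order_eq_zero.mp hf'0)
                rw [heq, hco, if_pos rfl]
              · exact hgt
            have hk' : (g + 1 - p * f'.order).toNat ≤ k := by
              have h2 : (p : ℤ) * (o + 1) ≤ p * f'.order :=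
                mul_le_mul_of_nonneg_left (by omega) (le_of_lt hpz)
              have hp2 : (2 : ℤ) ≤ (p : ℤ) := by exact_mod_cast hp.two_le
              have hk2 : (g + 1 - (p : ℤ) * o).toNat ≤ k + 1 := hk
              have h4 : (p : ℤ) * (o + 1) = (p : ℤ) * o + (p : ℤ) := by ring
              omega
            have ihh := ih f' hk'
            rw [hfp, HahnSeries.coeff_add, HahnSeries.coeff_single, ihh]
            split_ifs with h1 hdvd hdvd
            · obtain ⟨c, rfl⟩ := hdvd
              have hc : (p : ℤ) * c / p = c := Int.mul_ediv_cancel_left _ (by positivity)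
              rw [hc]
              have hcne : c = o := mul_left_cancel₀ (a := (p : ℤ)) (by positivity) h1
              rw [hcne, hco, if_pos rfl, zero_pow hp0, add_zero, ← ha]
            · exact absurd ⟨o, h1⟩ hdvd
            · obtain ⟨c, rfl⟩ := hdvd
              have hc : (p : ℤ) * c / p = c := Int.mul_ediv_cancel_left _ (by positivity)
              rw [hc]
              have hcne : c ≠ o := fun hco' => h1 (by rw [hco'])
              rw [hco, if_neg hcne, zero_add]
            · rw [zero_add]
  exact main (g + 1 - p * f.order).toNat f le_rfl

theorem hahn_frob_pow_coeff (hp : p.Prime) [CharP L p] (n : ℕ) (f : LaurentSeries L) :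
    ∀ g : ℤ, (f ^ p ^ n).coeff g
      = if ((p : ℤ)) ^ n ∣ g then (f.coeff (g / (p : ℤ) ^ n)) ^ p ^ n else 0 := by
  classical
  induction n with
  | zero => intro g; simp
  | succ n ih =>
      intro g
      have hps : f ^ p ^ (n + 1) = (f ^ p ^ n) ^ p := by
        rw [← pow_mul, pow_succ]
      rw [hps, hahn_frob_coeff hp]
      have hp0 : p ≠ 0 := hp.ne_zero
      have hpz : (0 : ℤ) < (p : ℤ) := by exact_mod_cast hp.pos
      by_cases hdvd : ((p : ℤ)) ^ (n + 1) ∣ g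
      · obtain ⟨d, rfl⟩ := hdvd
        have h1 : (p : ℤ) ∣ (p : ℤ) ^ (n + 1) * d := ⟨(p : ℤ) ^ n * d, by ring⟩
        rw [if_pos h1]
        have h2 : ((p : ℤ)) ^ (n + 1) * d / p = (p : ℤ) ^ n * d := by
          rw [show ((p : ℤ)) ^ (n + 1) * d = (p : ℤ) * ((p : ℤ) ^ n * d) by ring]
          exact Int.mul_ediv_cancel_left _ (by positivity)
        rw [h2, ih]
        rw [if_pos ⟨d, rfl⟩]
        have h3 : (p : ℤ) ^ n * d / (p : ℤ) ^ n = d := Int.mul_ediv_cancel_left _ (by positivity)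
        have h4 : (p : ℤ) ^ (n + 1) * d / (p : ℤ) ^ (n + 1) = d :=
          Int.mul_ediv_cancel_left _ (by positivity)
        rw [h3, if_pos ⟨d, rfl⟩, h4, ← pow_mul, ← pow_succ]
      · rw [if_neg hdvd]
        by_cases h1 : (p : ℤ) ∣ g
        · rw [if_pos h1, ih]
          obtain ⟨c, rfl⟩ := h1
          have hc : (p : ℤ) * c / p = c := Int.mul_ediv_cancel_left _ (by positivity)
          rw [hc]
          have h2 : ¬ ((p : ℤ)) ^ n ∣ c := by
            intro ⟨d, hd⟩
            exact hdvd ⟨d, by rw [hd]; ring⟩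
          rw [if_neg h2, zero_pow hp0]
        · rw [if_neg h1]

end Frobenius
section TowerDecomp

theorem hahn_coeff_sum {Γ R : Type*} [PartialOrder Γ] [AddCommMonoid R] {ι : Type*}
    (s : Finset ι) (F : ι → HahnSeries Γ R) (g : Γ) :
    (∑ i ∈ s, F i).coeff g = ∑ i ∈ s, (F i).coeff g := by
  classical
  induction s using Finset.cons_induction with
  | empty => simp
  | cons a s ha ih => rw [Finset.sum_cons, Finset.sum_cons, HahnSeries.coeff_add, ih]

variable {p : ℕ} (n : ℕ)
variable (E : ℕ → Type) [∀ j, Field (E j)] (estep : ∀ j, E (j + 1) ≃+* LaurentSeries (E j))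
variable (𝔽 : Type) [Field 𝔽] [Fintype 𝔽] [CharP 𝔽 p] (e0 : E 0 ≃+* 𝔽)

include estep 𝔽 e0 in
theorem charP_E : ∀ m, CharP (E m) p
  | 0 => (e0 : E 0 →+* 𝔽).charP e0.injective p
  | m + 1 => by
      haveI := charP_E m
      haveI : CharP (LaurentSeries (E m)) p := charP_laurent
      exact ((estep m) : E (m + 1) →+* LaurentSeries (E m)).charP (estep m).injective p

include estep 𝔽 e0 in
theorem surj_pow_E0 (hp : p.Prime) : Function.Surjective (fun x : E 0 => x ^ p ^ n) := by
  haveI : Finite (E 0) := Finite.of_equiv 𝔽 e0.toEquiv.symm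
  haveI := charP_E (p := p) E estep 𝔽 e0 0
  haveI : Fact p.Prime := ⟨hp⟩
  rw [← Finite.injective_iff_surjective]
  intro x y h
  have hsub : (x - y) ^ p ^ n = 0 := by
    rw [sub_pow_char_pow]
    simpa using sub_eq_zero.mpr h
  have := pow_eq_zero_iff (n := p ^ n) (pow_ne_zero n hp.ne_zero) |>.mp hsub
  exact sub_eq_zero.mp this

include estep 𝔽 e0 in
theorem tower_decomp (hp : p.Prime) : ∀ (m : ℕ) (z : E m),
    ∃ a : (Fin m → Fin (p ^ n)) → E m,
    z = ∑ iv : Fin m → Fin (p ^ n), (a iv) ^ p ^ n *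
        ∏ j : Fin m, (myVar E estep m j.1 j.2) ^ ((iv j : ℕ)) := by
  intro m
  induction m with
  | zero =>
      intro z
      obtain ⟨w, hw⟩ := surj_pow_E0 n E estep 𝔽 e0 hp z
      refine ⟨fun _ => w, ?_⟩
      rw [Fintype.sum_unique]
      simp [← hw]
  | succ m ih =>
      intro z
      haveI : CharP (E m) p := charP_E (p := p) E estep 𝔽 e0 m
      haveI : Fact p.Prime := ⟨hp⟩
      have hP0 : 0 < p ^ n := pow_pos hp.pos n
      set f : LaurentSeries (E m) := estep m z with hfdef
      -- canonical coefficient decompositions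
      have hdec : ∀ c : E m, ∃ a : (Fin m → Fin (p ^ n)) → E m, (c = 0 → a = 0) ∧
          c = ∑ jv : Fin m → Fin (p ^ n), (a jv) ^ p ^ n *
            ∏ j : Fin m, (myVar E estep m j.1 j.2) ^ ((jv j : ℕ)) := by
        intro c
        by_cases hc : c = 0
        · refine ⟨0, fun _ => rfl, ?_⟩
          subst hc
          symm
          refine Finset.sum_eq_zero fun jv _ => ?_
          rw [Pi.zero_apply, zero_pow (pow_ne_zero n hp.ne_zero), zero_mul]
        · obtain ⟨a, ha⟩ := ih c
          exact ⟨a, fun h => absurd h hc, ha⟩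
      set dec : E m → (Fin m → Fin (p ^ n)) → E m := fun c => Classical.choose (hdec c)
        with hdecdef
      have hdec0 : dec 0 = 0 := (Classical.choose_spec (hdec 0)).1 rfl
      have hdecspec : ∀ c : E m, c = ∑ jv : Fin m → Fin (p ^ n), (dec c jv) ^ p ^ n *
          ∏ j : Fin m, (myVar E estep m j.1 j.2) ^ ((jv j : ℕ)) :=
        fun c => (Classical.choose_spec (hdec c)).2
      set ac : ℤ → Fin (p ^ n) → (Fin m → Fin (p ^ n)) → E m :=
        fun q i jv => dec (f.coeff ((p ^ n : ℤ) * q + (i : ℤ))) jv with hac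
      have hsupport : ∀ (i : Fin (p ^ n)) (jv : Fin m → Fin (p ^ n)),
          (Function.support fun q => ac q i jv) ⊆
            {q : ℤ | f.coeff ((p ^ n : ℤ) * q + (i : ℤ)) ≠ 0} := by
        intro i jv q hq
        simp only [Function.mem_support, hac] at hq
        intro hc
        rw [hc] at hq
        rw [hdec0] at hq
        exact hq rfl
      have hwf : ∀ i : Fin (p ^ n),
          ({q : ℤ | f.coeff ((p ^ n : ℤ) * q + (i : ℤ)) ≠ 0}).IsWF := by
        intro i
        rw [Set.isWF_iff_no_descending_seq]
        intro seq hanti hmem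
        have hWF := f.isWF_support
        rw [Set.isWF_iff_no_descending_seq] at hWF
        refine hWF (fun t => (p ^ n : ℤ) * seq t + (i : ℤ)) ?_ (fun t => hmem t)
        intro t1 t2 hlt
        have h1 := hanti hlt
        have hPz : (0 : ℤ) < (p ^ n : ℤ) := by exact_mod_cast hP0
        have h2 := mul_lt_mul_of_pos_left h1 hPz
        show (p : ℤ) ^ n * seq t2 + ((i : ℕ) : ℤ) < (p : ℤ) ^ n * seq t1 + ((i : ℕ) : ℤ)
        omega
      set G : Fin (p ^ n) → (Fin m → Fin (p ^ n)) → LaurentSeries (E m) :=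
        fun i jv => ⟨fun q => ac q i jv, ((hwf i).mono (hsupport i jv)).isPWO⟩ with hG
      set r : (Fin m → Fin (p ^ n)) → E m :=
        fun jv => ∏ j : Fin m, (myVar E estep m j.1 j.2) ^ ((jv j : ℕ)) with hr
      have hppos : (0 : ℤ) < (p : ℤ) := by exact_mod_cast hp.pos
      have hPz : (0 : ℤ) < (p : ℤ) ^ n := pow_pos hppos n
      have hPne : ((p : ℤ) ^ n) ≠ 0 := ne_of_gt hPz
      have hcast : ((p ^ n : ℕ) : ℤ) = (p : ℤ) ^ n := by push_cast; ring
      have coeffterm : ∀ (i : Fin (p ^ n)) (jv : Fin m → Fin (p ^ n)) (g : ℤ),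
          ((G i jv) ^ p ^ n * HahnSeries.C (r jv) * HahnSeries.single ((i : ℕ) : ℤ) 1).coeff g
            = (if ((p : ℤ)) ^ n ∣ (g - ((i : ℕ) : ℤ))
                then (ac ((g - ((i : ℕ) : ℤ)) / (p : ℤ) ^ n) i jv) ^ p ^ n else 0) * r jv := by
        intro i jv g
        have h1 := HahnSeries.coeff_mul_single_add
          (x := (G i jv) ^ p ^ n * HahnSeries.C (r jv)) (r := (1 : E m))
          (a := g - ((i : ℕ) : ℤ)) (b := ((i : ℕ) : ℤ))
        rw [sub_add_cancel, mul_one] at h1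
        rw [h1, HahnSeries.C_apply, HahnSeries.coeff_mul_single_zero,
          hahn_frob_pow_coeff hp n (G i jv) (g - ((i : ℕ) : ℤ))]
      have hfsum : f = ∑ i : Fin (p ^ n), ∑ jv : Fin m → Fin (p ^ n),
          (G i jv) ^ p ^ n * HahnSeries.C (r jv) * HahnSeries.single ((i : ℕ) : ℤ) 1 := by
        ext g
        rw [hahn_coeff_sum]
        have hrw : ∀ i : Fin (p ^ n),
            (∑ jv : Fin m → Fin (p ^ n),
              (G i jv) ^ p ^ n * HahnSeries.C (r jv)
                * HahnSeries.single ((i : ℕ) : ℤ) 1).coeff g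
            = ∑ jv : Fin m → Fin (p ^ n),
              (if ((p : ℤ)) ^ n ∣ (g - ((i : ℕ) : ℤ))
                then (ac ((g - ((i : ℕ) : ℤ)) / (p : ℤ) ^ n) i jv) ^ p ^ n else 0) * r jv := by
          intro i
          rw [hahn_coeff_sum]
          exact Finset.sum_congr rfl fun jv _ => coeffterm i jv g
        rw [Finset.sum_congr rfl fun i _ => hrw i]
        -- locate the unique congruence class
        set q0 : ℤ := g / ((p : ℤ) ^ n) with hq0def
        set i0 : ℤ := g % ((p : ℤ) ^ n) with hi0def
        have hq0 : (p : ℤ) ^ n * q0 + i0 = g := Int.mul_ediv_add_emod g ((p : ℤ) ^ n)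
        have hi0nonneg : 0 ≤ i0 := Int.emod_nonneg g hPne
        have hi0lt : i0 < (p : ℤ) ^ n := Int.emod_lt_of_pos g hPz
        set i0f : Fin (p ^ n) := ⟨i0.toNat, by omega⟩ with hi0f
        have hi0fz : ((i0f : ℕ) : ℤ) = i0 := by
          simp [hi0f, Int.toNat_of_nonneg hi0nonneg]
        have hdvd_iff : ∀ i : Fin (p ^ n), ((p : ℤ) ^ n ∣ (g - ((i : ℕ) : ℤ))) ↔ i = i0f := by
          intro i
          constructor
          · rintro ⟨c, hc⟩
            have h1 : g = (i : ℤ) + (p : ℤ) ^ n * c := by omega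
            have h2 : g % ((p : ℤ) ^ n) = ((i : ℕ) : ℤ) % ((p : ℤ) ^ n) := by
              rw [h1, Int.add_mul_emod_self_left]
            have h3 : ((i : ℕ) : ℤ) % ((p : ℤ) ^ n) = ((i : ℕ) : ℤ) := by
              apply Int.emod_eq_of_lt (by omega)
              have := i.isLt
              omega
            have h4 : ((i : ℕ) : ℤ) = i0 := by rw [hi0def, h2, h3]
            apply Fin.ext
            omega
          · rintro rfl
            exact ⟨q0, by omega⟩
        have hstep2 : ∀ i : Fin (p ^ n),
            (∑ jv : Fin m → Fin (p ^ n),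
              (if ((p : ℤ)) ^ n ∣ (g - ((i : ℕ) : ℤ))
                then (ac ((g - ((i : ℕ) : ℤ)) / (p : ℤ) ^ n) i jv) ^ p ^ n else 0) * r jv)
            = if i = i0f then ∑ jv : Fin m → Fin (p ^ n), (ac q0 i jv) ^ p ^ n * r jv else 0 := by
          intro i
          by_cases hii : i = i0f
          · subst hii
            rw [if_pos rfl]
            refine Finset.sum_congr rfl fun jv _ => ?_
            rw [if_pos ((hdvd_iff i0f).mpr rfl)]
            have : (g - ((i0f : ℕ) : ℤ)) / (p : ℤ) ^ n = q0 := by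
              have hsub : g - ((i0f : ℕ) : ℤ) = (p : ℤ) ^ n * q0 := by omega
              rw [hsub, Int.mul_ediv_cancel_left _ hPne]
            rw [this]
          · rw [if_neg hii]
            refine Finset.sum_eq_zero fun jv _ => ?_
            rw [if_neg (fun hdd => hii ((hdvd_iff i).mp hdd)), zero_mul]
        rw [Finset.sum_congr rfl fun i _ => hstep2 i, Finset.sum_ite_eq' Finset.univ i0f]
        rw [if_pos (Finset.mem_univ _)]
        have hgq : (p : ℤ) ^ n * q0 + ((i0f : ℕ) : ℤ) = g := by omega
        have hacx : ∀ jv, ac q0 i0f jv = dec (f.coeff g) jv := by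
          intro jv
          show dec (f.coeff ((p : ℤ) ^ n * q0 + ((i0f : ℕ) : ℤ))) jv = dec (f.coeff g) jv
          rw [hgq]
        have := hdecspec (f.coeff g)
        rw [this]
        exact Finset.sum_congr rfl fun jv _ => by rw [hacx jv, hr]
      -- now pull back along (estep m).symm
      have hz : z = (estep m).symm (∑ i : Fin (p ^ n), ∑ jv : Fin m → Fin (p ^ n),
          (G i jv) ^ p ^ n * HahnSeries.C (r jv) * HahnSeries.single ((i : ℕ) : ℤ) 1) := by
        rw [← hfsum, hfdef, RingEquiv.symm_apply_apply]
      have hterm : ∀ (i : Fin (p ^ n)) (jv : Fin m → Fin (p ^ n)),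
          (estep m).symm ((G i jv) ^ p ^ n * HahnSeries.C (r jv)
              * HahnSeries.single ((i : ℕ) : ℤ) 1)
            = ((estep m).symm (G i jv)) ^ p ^ n *
              (∏ j : Fin m,
                (myVar E estep (m + 1) j.1 (Nat.lt_succ_of_lt j.2)) ^ ((jv j : ℕ))) *
              (myVar E estep (m + 1) m (Nat.lt_succ_self m)) ^ ((i : ℕ)) := by
        intro i jv
        rw [map_mul, map_mul, map_pow]
        congr 1
        · congr 1
          have hCr : (estep m).symm (HahnSeries.C (r jv)) = stepEmb E estep m (r jv) := rfl
          rw [hCr, hr]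
          rw [map_prod]
          refine Finset.prod_congr rfl fun j _ => ?_
          rw [map_pow, ← myVar_lt E estep m j.1 j.2 (Nat.lt_succ_of_lt j.2)]
        · have hsing : HahnSeries.single ((i : ℕ) : ℤ) (1 : E m)
              = (HahnSeries.single (1 : ℤ) (1 : E m)) ^ ((i : ℕ)) := by
            rw [HahnSeries.single_pow, one_pow, nsmul_eq_mul, mul_one]
          rw [hsing, map_pow, myVar_last]
      refine ⟨fun iv => (estep m).symm (G (iv (Fin.last m)) (fun j => iv j.castSucc)), ?_⟩
      rw [hz, map_sum]
      have hswap : ∀ i : Fin (p ^ n),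
          (estep m).symm (∑ jv : Fin m → Fin (p ^ n),
            (G i jv) ^ p ^ n * HahnSeries.C (r jv) * HahnSeries.single ((i : ℕ) : ℤ) 1)
          = ∑ jv : Fin m → Fin (p ^ n),
            ((estep m).symm (G i jv)) ^ p ^ n *
              (∏ j : Fin m,
                (myVar E estep (m + 1) j.1 (Nat.lt_succ_of_lt j.2)) ^ ((jv j : ℕ))) *
              (myVar E estep (m + 1) m (Nat.lt_succ_self m)) ^ ((i : ℕ)) := by
        intro i
        rw [map_sum]
        exact Finset.sum_congr rfl fun jv _ => hterm i jv
      rw [Finset.sum_congr rfl fun i _ => hswap i]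
      -- reindex the right-hand side
      set e : ((Fin m → Fin (p ^ n)) × Fin (p ^ n)) ≃ (Fin (m + 1) → Fin (p ^ n)) :=
        { toFun := fun x => Fin.snoc x.1 x.2
          invFun := fun iv => (fun j => iv j.castSucc, iv (Fin.last m))
          left_inv := fun x => by
            refine Prod.ext ?_ ?_
            · funext j; simp [Fin.snoc_castSucc]
            · simp [Fin.snoc_last]
          right_inv := fun iv => by
            funext j
            refine Fin.lastCases ?_ ?_ j
            · simp [Fin.snoc_last]
            · intro j'; simp [Fin.snoc_castSucc] } with hedef
      set TermF : Fin (p ^ n) → (Fin m → Fin (p ^ n)) → E (m + 1) :=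
        fun i jv => ((estep m).symm (G i jv)) ^ p ^ n *
          (∏ j : Fin m, (myVar E estep (m + 1) j.1 (Nat.lt_succ_of_lt j.2)) ^ ((jv j : ℕ))) *
          (myVar E estep (m + 1) m (Nat.lt_succ_self m)) ^ ((i : ℕ)) with hTermF
      have hgoalR : ∀ iv : Fin (m + 1) → Fin (p ^ n),
          (∏ j : Fin (m + 1), (myVar E estep (m + 1) j.1 j.2) ^ ((iv j : ℕ)))
          = (∏ j : Fin m,
              (myVar E estep (m + 1) j.1 (Nat.lt_succ_of_lt j.2)) ^ ((iv j.castSucc : ℕ)))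
            * (myVar E estep (m + 1) m (Nat.lt_succ_self m)) ^ ((iv (Fin.last m) : ℕ)) := by
        intro iv
        rw [Fin.prod_univ_castSucc
          (f := fun j : Fin (m + 1) => (myVar E estep (m + 1) j.1 j.2) ^ ((iv j : ℕ)))]
        rfl
      have hsum1 : (∑ i : Fin (p ^ n), ∑ jv : Fin m → Fin (p ^ n), TermF i jv)
          = ∑ x : (Fin m → Fin (p ^ n)) × Fin (p ^ n), TermF x.2 x.1 := by
        rw [Finset.sum_comm]
        rw [Fintype.sum_prod_type]
      have hsum2 : (∑ x : (Fin m → Fin (p ^ n)) × Fin (p ^ n), TermF x.2 x.1)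
          = ∑ iv : Fin (m + 1) → Fin (p ^ n),
              TermF (iv (Fin.last m)) (fun j => iv j.castSucc) := by
        rw [← Equiv.sum_comp e (fun iv : Fin (m + 1) → Fin (p ^ n) =>
          TermF (iv (Fin.last m)) (fun j => iv j.castSucc))]
        refine Finset.sum_congr rfl fun x _ => ?_
        have h1 : (e x) (Fin.last m) = x.2 := by simp [hedef, Fin.snoc_last]
        have h2 : (fun j => (e x) j.castSucc) = x.1 := by
          funext j; simp [hedef, Fin.snoc_castSucc]
        rw [h1, h2]
      calc (∑ i : Fin (p ^ n), ∑ jv : Fin m → Fin (p ^ n), TermF i jv)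
          = ∑ iv : Fin (m + 1) → Fin (p ^ n),
              TermF (iv (Fin.last m)) (fun j => iv j.castSucc) := by rw [hsum1, hsum2]
        _ = ∑ iv : Fin (m + 1) → Fin (p ^ n),
              ((estep m).symm (G (iv (Fin.last m)) (fun j => iv j.castSucc))) ^ p ^ n *
                ∏ j : Fin (m + 1), (myVar E estep (m + 1) j.1 j.2) ^ ((iv j : ℕ)) := by
            refine Finset.sum_congr rfl fun iv _ => ?_
            rw [hgoalR iv, hTermF, ← mul_assoc]

end TowerDecomp

set_option maxHeartbeats 1000000

/-- Let `𝓛` be a `d`-dimensional local field of mixed characteristic with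
system of local uniformizers `T_1, …, T_{d−1}, π_𝓛`, let `K ⊆ 𝓛` with `O_K ⊆ O_𝓛`, let `F`
be a formal group law with coefficients in `O_K`, and fix `n ≥ 1`.  Write `x ⊕ y` for the
formal group operation `F(x,y)` on the maximal ideal `μ_𝓛`, and `⊖` for the induced
subtraction.  Then every `y ∈ μ_𝓛` is a convergent infinite formal-group sum
`y = ⊕_{k=1}^∞ y_k` with `y_k = ⊕_{ī ∈ J_n} γ_{ī,k}^{p^n}·T_1^{i_1}⋯T_{d−1}^{i_{d−1}}·π_𝓛^k`,
`γ_{ī,k} ∈ O_𝓛`: the partial sums satisfy `y ⊖ (y_1 ⊕ ⋯ ⊕ y_m) ≡ 0 (mod π_𝓛^{m+1})`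
for every `m ≥ 1`. -/
theorem formal_group_series_representation
    (p : ℕ) (hp : p.Prime) (d : ℕ) (hd : 1 ≤ d)
    (𝓛 : Type*) [Field 𝓛] [CharZero 𝓛]
    (v : 𝓛 → WithTop ℤ) (hv : IsDiscVal v)
    (π𝓛 : 𝓛) (hπ : v π𝓛 = 1)
    -- residue structure (𝓛 is a finite extension of a standard `d`-dimensional local field):
    (𝔽 : Type) [Field 𝔽] [Fintype 𝔽] [CharP 𝔽 p]
    (E : ℕ → Type) [∀ j, Field (E j)] (estep : ∀ j, E (j + 1) ≃+* LaurentSeries (E j))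
    (e0 : E 0 ≃+* 𝔽)
    (res : hv.subring →+* E (d - 1))
    (hres_surj : Function.Surjective res)
    (hres_ker : ∀ x : hv.subring, res x = 0 ↔ 1 ≤ v (x : 𝓛))
    (T : Fin (d - 1) → hv.subring)
    (hT : ∀ j : Fin (d - 1), res (T j) = towerVar E estep (d - 1) j j.isLt)
    -- the subfield `K ⊆ 𝓛` and the formal group law `F` over `O_K`:
    (K : Subfield 𝓛)
    (F : MvPowerSeries (Fin 2) 𝓛)
    (hFK : ∀ e, MvPowerSeries.coeff e F ∈ K ∧ (0 : WithTop ℤ) ≤ v (MvPowerSeries.coeff e F))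
    (hF : IsFormalGroupLaw F)
    -- the induced group operation `⊕` and negation `⊖` on the maximal ideal `μ_𝓛`:
    (fadd : 𝓛 → 𝓛 → 𝓛) (fneg : 𝓛 → 𝓛)
    (hfadd : ∀ x y : 𝓛, 1 ≤ v x → 1 ≤ v y →
      MvEval2 v F x y (fadd x y) ∧ 1 ≤ v (fadd x y))
    (hfneg : ∀ x : 𝓛, 1 ≤ v x → 1 ≤ v (fneg x) ∧ fadd x (fneg x) = 0)
    (n : ℕ) (hn : 1 ≤ n) :
    ∀ y : 𝓛, 1 ≤ v y →
      ∃ γ : ℕ → (Fin (d - 1) → Fin (p ^ n)) → hv.subring,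
        ∀ m : ℕ, 1 ≤ m →
          ((m : ℤ) + 1 : WithTop ℤ) ≤
            v (fadd y (fneg (finFold fadd ((List.range m).map (· + 1)) (fun k =>
              finFold fadd (Finset.univ : Finset (Fin (d - 1) → Fin (p ^ n))).toList
                (fun iv => ((γ k iv : 𝓛)) ^ (p ^ n) *
                  (∏ j : Fin (d - 1), ((T j : 𝓛)) ^ ((iv j : ℕ))) * π𝓛 ^ k))))) := by
  classical
  intro y hy
  -- abbreviations
  set J := (Fin (d - 1) → Fin (p ^ n)) with hJ
  have hFv : ∀ e, (0 : WithTop ℤ) ≤ v (MvPowerSeries.coeff e F) := fun e => (hFK e).2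
  have hF0 := hF.coeff_zero
  have hFX := hF.coeff_X
  have hFY := hF.coeff_Y
  have hfadd1 : ∀ x y : 𝓛, 1 ≤ v x → 1 ≤ v y → MvEval2 v F x y (fadd x y) :=
    fun x y hx hy => (hfadd x y hx hy).1
  have hπne : π𝓛 ≠ 0 := by
    intro h
    rw [h, hv.v_zero] at hπ
    exact (by simp : (⊤ : WithTop ℤ) ≠ 1) hπ
  have hvpi : ∀ k : ℕ, v (π𝓛 ^ k) = (k : WithTop ℤ) := by
    intro k
    induction k with
    | zero => simpa using hv.v_one
    | succ k ih =>
        rw [pow_succ, hv.map_mul, ih, hπ, Nat.cast_add, Nat.cast_one]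
  -- term functions
  set tm : ℕ → (J → hv.subring) → J → 𝓛 := fun k c iv =>
    ((c iv : 𝓛)) ^ (p ^ n) * (∏ j : Fin (d - 1), ((T j : 𝓛)) ^ ((iv j : ℕ))) * π𝓛 ^ k with htm
  set YY : ℕ → (J → hv.subring) → 𝓛 := fun k c =>
    finFold fadd (Finset.univ : Finset J).toList (tm k c) with hYY
  set SS : ℕ → (ℕ → (J → hv.subring)) → 𝓛 := fun m g =>
    finFold fadd ((List.range m).map (· + 1)) (fun k => YY k (g k)) with hSS
  -- basic valuation facts for terms
  have htmv : ∀ (k : ℕ) (c : J → hv.subring) (iv : J), ((k : ℕ) : WithTop ℤ) ≤ v (tm k c iv) := by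
    intro k c iv
    have h1 : (0 : WithTop ℤ) ≤ v (((c iv : 𝓛)) ^ (p ^ n)) :=
      hv.v_pow_ge_zero (c iv).2 (p ^ n)
    have h2 : (0 : WithTop ℤ) ≤ v (∏ j : Fin (d - 1), ((T j : 𝓛)) ^ ((iv j : ℕ))) :=
      hv.v_prod_ge_zero fun j _ => hv.v_pow_ge_zero (T j).2 _
    have h3 := hv.v_mul_ge (hv.v_mul_ge h1 h2) (le_of_eq (hvpi k).symm)
    simpa using h3
  have hsum_toList : ∀ (f : J → 𝓛),
      (((Finset.univ : Finset J).toList).map f).sum = ∑ iv : J, f iv := by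
    intro f
    exact Finset.sum_map_toList Finset.univ f
  have hYYv : ∀ (k : ℕ), 1 ≤ k → ∀ c : J → hv.subring,
      ((k : ℕ) : WithTop ℤ) ≤ v (YY k c) := by
    intro k hk c
    refine foldr_v_ge hv hFv hF0 hFX hFY hfadd1 k hk _ ?_ (by rw [hv.v_zero]; exact le_top)
    intro a ha
    obtain ⟨iv, _, rfl⟩ := List.mem_map.mp ha
    exact htmv k c iv
  have hYYsum : ∀ (k : ℕ), 1 ≤ k → ∀ c : J → hv.subring,
      ((k + 1 : ℕ) : WithTop ℤ) ≤ v (YY k c - ∑ iv : J, tm k c iv) := by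
    intro k hk c
    have h := foldr_sub_sum hv hFv hF0 hFX hFY hfadd1 k hk
      (((Finset.univ : Finset J).toList).map (tm k c))
      (by
        intro a ha
        obtain ⟨iv, _, rfl⟩ := List.mem_map.mp ha
        exact htmv k c iv)
    rw [hsum_toList (tm k c)] at h
    exact h
  have hSSv : ∀ (m : ℕ) (g : ℕ → (J → hv.subring)), 1 ≤ v (SS m g) := by
    intro m g
    have h := foldr_v_ge hv hFv hF0 hFX hFY hfadd1 1 le_rfl
      ((((List.range m).map (· + 1))).map (fun k => YY k (g k)))
      (by
        intro a ha
        obtain ⟨k, hk, rfl⟩ := List.mem_map.mp ha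
        obtain ⟨k', _, rfl⟩ := List.mem_map.mp hk
        have := hYYv (k' + 1) (by omega) (g (k' + 1))
        exact le_trans (Nat.mono_cast (by omega)) this)
      (s := 0) (by rw [hv.v_zero]; exact le_top)
    rw [Nat.cast_one] at h
    exact h
  -- the choice step
  have hchoice : ∀ (δ : 𝓛) (m : ℕ), ∃ g : J → hv.subring,
      ((m + 1 : ℕ) : WithTop ℤ) ≤ v δ →
      ((m + 2 : ℕ) : WithTop ℤ) ≤ v (δ - ∑ iv : J, tm (m + 1) g iv) := by
    intro δ m
    by_cases hδ : ((m + 1 : ℕ) : WithTop ℤ) ≤ v δ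
    swap
    · exact ⟨fun _ => 0, fun h => absurd h hδ⟩
    set u : 𝓛 := δ / π𝓛 ^ (m + 1) with hu
    have hu' : δ = u * π𝓛 ^ (m + 1) := (div_mul_cancel₀ δ (pow_ne_zero _ hπne)).symm
    have hvu : (0 : WithTop ℤ) ≤ v u := by
      by_cases h0 : u = 0
      · rw [h0, hv.v_zero]; exact le_top
      · have hne : v u ≠ ⊤ := fun hc => h0 ((hv.eq_top_iff u).mp hc)
        obtain ⟨k, hk⟩ := WithTop.ne_top_iff_exists.mp hne
        rw [hu'] at hδ
        rw [hv.map_mul, hvpi, ← hk] at hδ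
        have h2 : ((m + 1 : ℕ) : ℤ) ≤ k + (m + 1 : ℕ) := by exact_mod_cast hδ
        rw [← hk]
        exact_mod_cast (by omega : (0 : ℤ) ≤ k)
    set U : hv.subring := ⟨u, hvu⟩ with hU
    obtain ⟨A, hA⟩ := tower_decomp (p := p) n E estep 𝔽 e0 hp (d - 1) (res U)
    choose glift hglift using fun iv : J => hres_surj (A iv)
    set Z : hv.subring := ∑ iv : J, (glift iv) ^ (p ^ n) *
      ∏ j : Fin (d - 1), (T j) ^ ((iv j : ℕ)) with hZ
    have hresZ : res Z = res U := by
      rw [hZ, map_sum, hA]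
      refine Finset.sum_congr rfl fun iv _ => ?_
      rw [map_mul, map_pow, hglift, map_prod]
      congr 1
      refine Finset.prod_congr rfl fun j _ => ?_
      rw [map_pow, hT j, towerVar_eq_myVar]
    have hker : (1 : WithTop ℤ) ≤ v ((U - Z : hv.subring) : 𝓛) :=
      (hres_ker (U - Z)).mp (by rw [map_sub, hresZ, sub_self])
    refine ⟨glift, fun _ => ?_⟩
    have hZcoe : ((Z : hv.subring) : 𝓛)
        = ∑ iv : J, ((glift iv : 𝓛)) ^ (p ^ n) *
            ∏ j : Fin (d - 1), ((T j : 𝓛)) ^ ((iv j : ℕ)) := by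
      rw [hZ]
      push_cast
      rfl
    have key : δ - ∑ iv : J, tm (m + 1) glift iv
        = ((U - Z : hv.subring) : 𝓛) * π𝓛 ^ (m + 1) := by
      have hUZ : ((U - Z : hv.subring) : 𝓛) = u - ((Z : hv.subring) : 𝓛) := by push_cast; rfl
      rw [hUZ, hZcoe, htm]
      rw [hu']
      rw [sub_mul, Finset.sum_mul]
    rw [key, hv.map_mul, hvpi]
    have hc2 : ((m + 2 : ℕ) : WithTop ℤ) = 1 + ((m + 1 : ℕ) : WithTop ℤ) := by
      rw [show (m + 2) = 1 + (m + 1) by omega, Nat.cast_add, Nat.cast_one]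
    rw [hc2]
    exact add_le_add hker le_rfl
  -- the recursive construction
  set gstep : ℕ → (ℕ → (J → hv.subring)) → (ℕ → (J → hv.subring)) :=
    fun m prev => Function.update prev (m + 1)
      (Classical.choose (hchoice (y - SS m prev) m)) with hgstep
  set gseq : ℕ → (ℕ → (J → hv.subring)) :=
    fun m => Nat.rec (motive := fun _ => ℕ → (J → hv.subring)) (fun _ _ => 0) gstep m with hgseq
  have hgseq_succ : ∀ m, gseq (m + 1) = gstep m (gseq m) := fun m => rfl
  -- SS only depends on values at 1..m
  have hSScongr : ∀ (m : ℕ) (g g' : ℕ → (J → hv.subring)),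
      (∀ k, 1 ≤ k → k ≤ m → g k = g' k) → SS m g = SS m g' := by
    intro m g g' hgg
    simp only [hSS]
    unfold finFold
    have hmap : ((List.range m).map (· + 1)).map (fun k => YY k (g k))
        = ((List.range m).map (· + 1)).map (fun k => YY k (g' k)) := by
      refine List.map_congr_left fun k hk => ?_
      obtain ⟨k', hk', rfl⟩ := List.mem_map.mp hk
      rw [hgg (k' + 1) (by omega) (Nat.succ_le_of_lt (List.mem_range.mp hk'))]
    rw [hmap]
  -- the invariant
  have hInv : ∀ m : ℕ, ((m + 1 : ℕ) : WithTop ℤ) ≤ v (y - SS m (gseq m)) := by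
    intro m
    induction m with
    | zero =>
        have h0 : SS 0 (gseq 0) = 0 := rfl
        rw [h0, sub_zero, Nat.cast_one]
        exact hy
    | succ m ih =>
        set g := gseq m with hg
        set gnew := Classical.choose (hchoice (y - SS m g) m) with hgnew
        have hspec := Classical.choose_spec (hchoice (y - SS m g) m) ih
        set g' := gseq (m + 1) with hg'
        have hg'eq : g' = Function.update g (m + 1) gnew := rfl
        have hsame : SS m g' = SS m g := by
          refine hSScongr m g' g fun k hk1 hk2 => ?_
          rw [hg'eq, Function.update_of_ne (by omega)]
        have hg'last : g' (m + 1) = gnew := by rw [hg'eq, Function.update_self]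
        -- decompose SS (m+1)
        have hlist : (List.range (m + 1)).map (· + 1)
            = ((List.range m).map (· + 1)) ++ [m + 1] := by
          rw [List.range_succ, List.map_append]
          rfl
        have hSSsucc : SS (m + 1) g'
            = (((List.range m).map (· + 1)).map (fun k => YY k (g' k))).foldr fadd
                (fadd (YY (m + 1) gnew) 0) := by
          simp only [hSS]
          unfold finFold
          rw [hlist, List.map_append, List.foldr_append]
          rw [show (List.map (fun k => YY k (g' k)) [m + 1]).foldr fadd 0
            = fadd (YY (m + 1) (g' (m + 1))) 0 from rfl, hg'last]
        have hSSm : SS m g'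
            = (((List.range m).map (· + 1)).map (fun k => YY k (g' k))).foldr fadd 0 := rfl
        have hYnew : ((m + 1 : ℕ) : WithTop ℤ) ≤ v (YY (m + 1) gnew) :=
          hYYv (m + 1) (by omega) gnew
        have hA : ((m + 1 : ℕ) : WithTop ℤ) ≤ v (fadd (YY (m + 1) gnew) 0) :=
          fadd_v_ge hv hFv hF0 hFX hFY hfadd1 (m + 1) (by omega) hYnew
            (by rw [hv.v_zero]; exact le_top)
        have hlmem : ∀ a ∈ ((List.range m).map (· + 1)).map (fun k => YY k (g' k)), 1 ≤ v a := by
          intro a ha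
          obtain ⟨k, hk, rfl⟩ := List.mem_map.mp ha
          obtain ⟨k', _, rfl⟩ := List.mem_map.mp hk
          have := hYYv (k' + 1) (by omega) (g' (k' + 1))
          exact le_trans (by rw [← Nat.cast_one]; exact Nat.mono_cast (by omega)) this
        have b1 := foldr_seed_diff hv hFv hF0 hFX hFY hfadd1 (m + 1)
          (((List.range m).map (· + 1)).map (fun k => YY k (g' k))) hlmem
          (s := 0) (s' := fadd (YY (m + 1) gnew) 0)
          (by rw [hv.v_zero]; exact le_top)
          (le_trans (by rw [← Nat.cast_one]; exact Nat.mono_cast (by omega)) hA)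
          (by rw [sub_zero]; exact hA)
        rw [← hSSsucc, ← hSSm, hsame] at b1
        have b2 := fadd_sub_add hv hFv hF0 hFX hFY hfadd1 (m + 1) (by omega)
          (a := YY (m + 1) gnew) (b := (0 : 𝓛)) hYnew (by rw [hv.v_zero]; exact le_top)
        have b3 := hYYsum (m + 1) (by omega) gnew
        -- combine
        have hidd : y - SS (m + 1) g'
            = ((y - SS m g) - ∑ iv : J, tm (m + 1) gnew iv)
              - (SS (m + 1) g' - SS m g - (fadd (YY (m + 1) gnew) 0 - 0))
              - (fadd (YY (m + 1) gnew) 0 - YY (m + 1) gnew - 0)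
              - (YY (m + 1) gnew - ∑ iv : J, tm (m + 1) gnew iv) := by ring
        rw [show m + 1 + 1 = m + 2 from rfl]
        rw [hidd]
        exact hv.v_sub_ge (hv.v_sub_ge (hv.v_sub_ge hspec b1) b2) b3
  -- the final answer
  refine ⟨fun k => gseq k k, ?_⟩
  intro m hm
  have hagree : ∀ m k, 1 ≤ k → k ≤ m → gseq m k = gseq k k := by
    intro m
    induction m with
    | zero => intro k hk1 hk2; omega
    | succ m ih =>
        intro k hk1 hk2
        rcases Nat.lt_or_ge k (m + 1) with hlt | hge
        · simp only [hgseq_succ, hgstep]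
          rw [Function.update_of_ne (by omega)]
          exact ih k hk1 (by omega)
        · have : k = m + 1 := by omega
          subst this
          rfl
  have hSSfinal : SS m (fun k => gseq k k) = SS m (gseq m) :=
    hSScongr m _ _ fun k hk1 hk2 => (hagree m k hk1 hk2).symm
  have hinv : ((m + 1 : ℕ) : WithTop ℤ) ≤ v (y - SS m (fun k => gseq k k)) := by
    rw [hSSfinal]; exact hInv m
  set S : 𝓛 := SS m (fun k => gseq k k) with hSdef
  have hvS : 1 ≤ v S := hSSv m _
  obtain ⟨hw1, hw2⟩ := hfneg S hvS
  have hc2 := hv.fadd_diff hFv hFX hFY hfadd1 (m + 1) (x := S) (y := fneg S)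
    (x' := y) (y' := fneg S) hvS hw1 hy hw1 hinv
    (by rw [sub_self, hv.v_zero]; exact le_top)
  have hsimp : fadd y (fneg S) - fadd S (fneg S) - (y - S) - (fneg S - fneg S)
      = fadd y (fneg S) - (y - S) := by rw [hw2]; ring
  rw [hsimp] at hc2
  have hfinal : ((m + 1 : ℕ) : WithTop ℤ) ≤ v (fadd y (fneg S)) := by
    have hidd : fadd y (fneg S) = (fadd y (fneg S) - (y - S)) + (y - S) := by ring
    rw [hidd]
    exact hv.v_add_ge (le_trans (Nat.mono_cast (by omega)) hc2) hinv
  have hcast : ((m : ℤ) + 1 : WithTop ℤ) = ((m + 1 : ℕ) : WithTop ℤ) := by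
    push_cast
    rfl
  rw [hcast]
  exact hfinal
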